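/- (Pointwise binomial–Poisson error bound) Let n ≥ 2 be an integer and p ∈ (0,1) with n p² ≤ 1/2, and let W be a binomial random variable with parameters n and p. Then for every integer k with 0 ≤ k ≤ n, | P(W = k) − e^{−np} (np)^k / k! | ≤ e^{3/4} · ( (np)^k / k! ) · e^{−np} · ( k²/n + n p² ). -/

import Mathlib

open Finset

private lemma sum_id_real (k : ℕ) : ∑ j ∈ range k, (j:ℝ) = k*(k-1)/2 := by
  induction k with
  | zero => simp
  | succ m ih => rw [Finset.sum_range_succ, ih]; push_cast; ring

private lemma sum_sq_real (k : ℕ) : ∑ j ∈ range k, (j:ℝ)^2 ≤ (k:ℝ)^3/3 := by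
  induction k with
  | zero => simp
  | succ m ih =>
    rw [Finset.sum_range_succ]
    push_cast
    nlinarith [ih, Nat.cast_nonneg (α := ℝ) m]

private lemma exp_lb (t : ℝ) (h0 : 0 ≤ t) (h2 : t ≤ 1/2) :
    Real.exp (-(t + 2*t^2)) ≤ 1 - t := by
  have hy : (0:ℝ) ≤ t + 2*t^2 := by positivity
  have hs : 1 + (t + 2*t^2) + (t + 2*t^2)^2/2 ≤ Real.exp (t + 2*t^2) := by
    have h3 := Real.sum_le_exp_of_nonneg hy 3
    simp [Finset.sum_range_succ, Nat.factorial] at h3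
    linarith
  have hE := Real.exp_pos (t + 2*t^2)
  rw [Real.exp_neg, inv_le_iff_one_le_mul₀' hE]
  nlinarith

private lemma two_le_exp34 : (2:ℝ) ≤ Real.exp (3/4) := by
  have h4 := Real.sum_le_exp_of_nonneg (by norm_num : (0:ℝ) ≤ 3/4) 4
  simp [Finset.sum_range_succ, Nat.factorial] at h4
  linarith

private lemma poly1 (n k p : ℝ) (hkk : 0 ≤ k*(k-1)) :
    2*k*p*n - k*(k-1) ≤ k^2 + n^2*p^2 := by
  nlinarith [sq_nonneg (k - n*p)]

private lemma poly2 (n k p : ℝ) (hn0 : 0 < n) (hkR : k ≤ n) (h : n*p^2 ≤ 1/2) :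
    2*k*p*n - k*(k-1) ≤ (3/2)*n := by
  nlinarith [sq_nonneg (k - n*p), mul_le_mul_of_nonneg_left h hn0.le]

private lemma poly3 (n k : ℝ) (hk0 : 0 ≤ k) (hn2 : 2 ≤ n) (hk2 : k^2 < n/2) :
    k ≤ n/2 := by
  by_contra hc
  push_neg at hc
  have h1 : (n/2)*(n/2) < k*k := by
    have h0 : 0 ≤ n/2 := by linarith
    exact mul_self_lt_mul_self h0 hc
  nlinarith

private lemma poly5 (n k : ℝ) (hn0 : 0 < n) (hk0 : 0 ≤ k) (h2k : 2*k ≤ n) :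
    (2/n^2)*(k^3/3) ≤ k^2/(3*n) := by
  have key : 2*k^3*(3*n) ≤ k^2*(3*n^2) := by
    nlinarith [mul_nonneg (mul_nonneg (sq_nonneg k) hn0.le) (sub_nonneg.2 h2k)]
  have e1 : (2/n^2)*(k^3/3) = 2*k^3/(3*n^2) := by
    ring
  rw [e1, div_le_div_iff₀ (by positivity) (by positivity)]
  linarith [key]

private lemma poly6 (n k : ℝ) (hn0 : 0 < n) :
    k^2/(2*n) + k^2/(3*n) ≤ k^2/n := by
  have e1 : k^2/(2*n) + k^2/(3*n) = (5/6)*(k^2/n) := by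
    field_simp; ring
  have h2 : 0 ≤ k^2/n := by positivity
  rw [e1]; linarith

set_option maxHeartbeats 4000000 in
/-- **Pointwise binomial–Poisson error bound.** Let `n ≥ 2`, `p ∈ (0,1)` with `np² ≤ 1/2`,
and let `W ∼ Binomial(n, p)`, so `P(W = k) = C(n,k) p^k (1−p)^{n−k}`.  Then for every
`0 ≤ k ≤ n`,
`|P(W = k) − e^{−np}(np)^k/k!| ≤ e^{3/4} ((np)^k/k!) e^{−np} (k²/n + np²)`. -/
theorem binomial_poisson_pointwise_bound (n : ℕ) (hn : 2 ≤ n) (p : ℝ)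
    (hp : 0 < p) (hp1 : p < 1) (h : n * p ^ 2 ≤ 1 / 2) :
    ∀ k : ℕ, k ≤ n →
      |(n.choose k : ℝ) * p ^ k * (1 - p) ^ (n - k) -
          Real.exp (-(n * p)) * (n * p) ^ k / (Nat.factorial k : ℝ)| ≤
        Real.exp (3 / 4) * ((n * p) ^ k / (Nat.factorial k : ℝ)) * Real.exp (-(n * p)) *
          ((k : ℝ) ^ 2 / n + n * p ^ 2) := by
  intro k hk
  have hn2 : (2:ℝ) ≤ (n:ℝ) := by exact_mod_cast hn
  have hn0 : (0:ℝ) < (n:ℝ) := by linarith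
  have hkR : (k:ℝ) ≤ (n:ℝ) := by exact_mod_cast hk
  have hk0 : (0:ℝ) ≤ (k:ℝ) := Nat.cast_nonneg k
  have hp4 : p^2 ≤ 1/4 := by
    have h1 : 0 ≤ ((n:ℝ)-2) * p^2 := mul_nonneg (by linarith) (sq_nonneg p)
    linarith [h1, h]
  have hp2 : p ≤ 1/2 := by nlinarith [hp4, hp.le]
  have hfac : (0:ℝ) < (Nat.factorial k : ℝ) := by
    exact_mod_cast Nat.factorial_pos k
  set Q : ℝ := ∏ j ∈ range k, (1 - (j:ℝ)/(n:ℝ)) with hQdef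
  set R : ℝ := (1 - p) ^ (n - k) with hRdef
  set A : ℝ := Q * R * Real.exp ((n:ℝ)*p) with hAdef
  set c : ℝ := ((n:ℝ)*p)^k / (Nat.factorial k : ℝ) * Real.exp (-((n:ℝ)*p)) with hcdef
  set D : ℝ := (k:ℝ)^2/(n:ℝ) + (n:ℝ)*p^2 with hDdef
  have hD0 : 0 ≤ D := by positivity
  have hc0 : 0 < c := by positivity
  clear_value Q R A c D
  -- identity: choose * p^k = (np)^k * Q / k!
  have hdesc : ((n.descFactorial k : ℕ) : ℝ) = ∏ j ∈ range k, ((n:ℝ) - j) := by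
    rw [Nat.descFactorial_eq_prod_range, Nat.cast_prod]
    refine Finset.prod_congr rfl fun j hj => ?_
    have hj' : j ≤ n := (mem_range.1 hj).le.trans hk
    exact Nat.cast_sub hj'
  have hprod : ((n:ℝ)*p)^k * Q = (∏ j ∈ range k, ((n:ℝ) - j)) * p ^ k := by
    calc ((n:ℝ)*p)^k * Q = ∏ j ∈ range k, (((n:ℝ)*p) * (1 - (j:ℝ)/(n:ℝ))) := by
          rw [Finset.prod_mul_distrib, Finset.prod_const, card_range, hQdef]
      _ = ∏ j ∈ range k, (((n:ℝ) - j) * p) := by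
          refine Finset.prod_congr rfl fun j hj => ?_
          field_simp
      _ = (∏ j ∈ range k, ((n:ℝ) - j)) * p ^ k := by
          rw [Finset.prod_mul_distrib, Finset.prod_const, card_range]
  have hchoose : (n.choose k : ℝ) * p ^ k = ((n:ℝ)*p)^k * Q / (Nat.factorial k : ℝ) := by
    have hd : ((n.descFactorial k : ℕ) : ℝ) = (Nat.factorial k : ℝ) * (n.choose k : ℝ) := by
      exact_mod_cast congrArg (Nat.cast (R := ℝ)) (Nat.descFactorial_eq_factorial_mul_choose n k)
    rw [hprod, ← hdesc, hd]
    field_simp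
  have hterm1 : (n.choose k : ℝ) * p ^ k * (1 - p) ^ (n - k) = c * A := by
    rw [hchoose, hAdef, hcdef, Real.exp_neg]
    rw [← hRdef]
    field_simp
  have hterm2 : Real.exp (-((n:ℝ) * p)) * ((n:ℝ) * p) ^ k / (Nat.factorial k : ℝ) = c := by
    rw [hcdef]; ring
  -- main bound
  have key : |A - 1| ≤ Real.exp (3/4) * D := by
    have hne : (n:ℝ) ≠ 0 := ne_of_gt hn0
    have hnk : ((n - k : ℕ):ℝ) = (n:ℝ) - (k:ℝ) := Nat.cast_sub hk
    have hQ0 : 0 ≤ Q := by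
      rw [hQdef]
      refine Finset.prod_nonneg fun j hj => ?_
      have : (j:ℝ) ≤ (n:ℝ) := by
        exact_mod_cast ((mem_range.1 hj).le.trans hk)
      have := div_le_one_of_le₀ this hn0.le
      linarith
    have hR0 : 0 ≤ R := by
      rw [hRdef]; exact pow_nonneg (by linarith) _
    have hA0 : 0 ≤ A := by
      rw [hAdef]; exact mul_nonneg (mul_nonneg hQ0 hR0) (Real.exp_pos _).le
    have hkk : 0 ≤ (k:ℝ)*((k:ℝ)-1) := by
      rcases Nat.eq_zero_or_pos k with h0 | h1
      · simp [h0]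
      · have h2 : (1:ℝ) ≤ (k:ℝ) := by exact_mod_cast h1
        exact mul_nonneg (by linarith) (by linarith)
    have hSval : ∑ j ∈ range k, (j:ℝ)/(n:ℝ) = (k:ℝ)*((k:ℝ)-1)/(2*(n:ℝ)) := by
      rw [← Finset.sum_div, sum_id_real]; ring
    set x : ℝ := (k:ℝ)*p - (k:ℝ)*((k:ℝ)-1)/(2*(n:ℝ)) with hxdef
    clear_value x
    have hAx : A ≤ Real.exp x := by
      have hQle : Q ≤ Real.exp (-((k:ℝ)*((k:ℝ)-1)/(2*(n:ℝ)))) := by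
        rw [hQdef, ← hSval, ← Finset.sum_neg_distrib, Real.exp_sum]
        refine Finset.prod_le_prod (fun j hj => ?_) (fun j hj => ?_)
        · have : (j:ℝ) ≤ (n:ℝ) := by exact_mod_cast ((mem_range.1 hj).le.trans hk)
          have := div_le_one_of_le₀ this hn0.le
          linarith
        · have := Real.add_one_le_exp (-((j:ℝ)/(n:ℝ)))
          linarith
      have hRle : R ≤ Real.exp (((n:ℝ)-(k:ℝ)) * (-p)) := by
        have h1 : 1 - p ≤ Real.exp (-p) := by
          have := Real.add_one_le_exp (-p); linarith
        rw [hRdef]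
        calc (1-p)^(n-k) ≤ Real.exp (-p) ^ (n - k) := by
              exact pow_le_pow_left₀ (by linarith) h1 _
          _ = Real.exp (((n:ℝ)-(k:ℝ)) * (-p)) := by
              rw [← hnk, ← Real.exp_nat_mul]
      rw [hAdef]
      calc Q * R * Real.exp ((n:ℝ)*p)
          ≤ Real.exp (-((k:ℝ)*((k:ℝ)-1)/(2*(n:ℝ)))) * Real.exp (((n:ℝ)-(k:ℝ)) * (-p))
              * Real.exp ((n:ℝ)*p) := by
            refine mul_le_mul_of_nonneg_right ?_ (Real.exp_pos _).le
            exact mul_le_mul hQle hRle hR0 (Real.exp_pos _).le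
        _ = Real.exp x := by
            rw [← Real.exp_add, ← Real.exp_add]
            congr 1
            rw [hxdef]; ring
    have hDn : D * (n:ℝ) = (k:ℝ)^2 + (n:ℝ)^2*p^2 := by
      rw [hDdef]; field_simp
    have hxn : 2 * x * (n:ℝ) = 2*(k:ℝ)*p*(n:ℝ) - (k:ℝ)*((k:ℝ)-1) := by
      rw [hxdef]; field_simp
    have hxD : x ≤ D / 2 := by
      have h2xn : 2 * x * (n:ℝ) ≤ D * (n:ℝ) := by
        rw [hxn, hDn]
        exact poly1 (n:ℝ) (k:ℝ) p hkk
      have h3 : 2 * x ≤ D := by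
        have h4 := (mul_le_mul_iff_of_pos_right hn0).1 h2xn
        linarith only [h4]
      linarith only [h3]
    have hx34 : x ≤ 3/4 := by
      have h2xn : 2 * x * (n:ℝ) ≤ (3/2) * (n:ℝ) := by
        rw [hxn]
        exact poly2 (n:ℝ) (k:ℝ) p hn0 hkR h
      have h3 : 2 * x ≤ 3/2 := by
        have h4 := (mul_le_mul_iff_of_pos_right hn0).1 h2xn
        linarith only [h4]
      linarith only [h3]
    have hup : A - 1 ≤ Real.exp (3/4) * D := by
      have hrhs : 0 ≤ Real.exp (3/4) * D := mul_nonneg (Real.exp_pos _).le hD0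
      rcases le_or_gt x 0 with hx0 | hx0
      · have : A ≤ 1 := hAx.trans (by simpa using Real.exp_le_one_iff.2 hx0)
        linarith
      · have h1 : Real.exp x - 1 ≤ x * Real.exp x := by
          have h2 := Real.add_one_le_exp (-x)
          rw [Real.exp_neg] at h2
          have h3 := Real.exp_pos x
          have h4 := mul_le_mul_of_nonneg_left h2 h3.le
          rw [mul_inv_cancel₀ (ne_of_gt h3)] at h4
          linarith [h4]
        have h5 : Real.exp x ≤ Real.exp (3/4) := Real.exp_le_exp.2 hx34
        have h6 : x * Real.exp x ≤ x * Real.exp (3/4) :=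
          mul_le_mul_of_nonneg_left h5 hx0.le
        have h7 : x * Real.exp (3/4) ≤ (D/2) * Real.exp (3/4) :=
          mul_le_mul_of_nonneg_right hxD (Real.exp_pos _).le
        have h8 : (D/2) * Real.exp (3/4) ≤ Real.exp (3/4) * D := by
          have := mul_nonneg hD0 (Real.exp_pos (3/4:ℝ)).le
          linarith
        linarith only [hAx, h1, h6, h7, h8]
    have hlow : 1 - A ≤ Real.exp (3/4) * D := by
      have h2e := two_le_exp34
      rcases le_or_gt (1/2) ((k:ℝ)^2/(n:ℝ)) with hbig | hsmall
      · have hD12 : (1:ℝ)/2 ≤ D := by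
          have : 0 ≤ (n:ℝ)*p^2 := by positivity
          rw [hDdef]; linarith
        have hmul : (2:ℝ)*(1/2) ≤ Real.exp (3/4) * D :=
          mul_le_mul h2e hD12 (by norm_num) (Real.exp_pos _).le
        linarith
      · have hk2 : (k:ℝ)^2 < (n:ℝ)/2 := by
          have := (div_lt_iff₀ hn0).1 hsmall
          linarith
        have hkn2 : (k:ℝ) ≤ (n:ℝ)/2 := poly3 (n:ℝ) (k:ℝ) hk0 hn2 hk2
        have hQge : Real.exp (-(∑ j ∈ range k, ((j:ℝ)/(n:ℝ) + 2*((j:ℝ)/(n:ℝ))^2))) ≤ Q := by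
          rw [hQdef, ← Finset.sum_neg_distrib, Real.exp_sum]
          refine Finset.prod_le_prod (fun j hj => (Real.exp_pos _).le) (fun j hj => ?_)
          have hjk : (j:ℝ) < (k:ℝ) := by exact_mod_cast mem_range.1 hj
          have hj0 : 0 ≤ (j:ℝ)/(n:ℝ) := by positivity
          have hj12 : (j:ℝ)/(n:ℝ) ≤ 1/2 := by
            rw [div_le_iff₀ hn0]; linarith
          exact exp_lb _ hj0 hj12
        have hRge : Real.exp (((n:ℝ)-(k:ℝ)) * (-(p + 2*p^2))) ≤ R := by
          have h1 : Real.exp (-(p + 2*p^2)) ≤ 1 - p := exp_lb p hp.le hp2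
          calc Real.exp (((n:ℝ)-(k:ℝ)) * (-(p + 2*p^2)))
              = Real.exp (-(p + 2*p^2)) ^ (n - k) := by rw [← hnk, ← Real.exp_nat_mul]
            _ ≤ (1 - p) ^ (n - k) := pow_le_pow_left₀ (Real.exp_pos _).le h1 _
            _ = R := hRdef.symm
        set x' : ℝ := (n:ℝ)*p - (∑ j ∈ range k, ((j:ℝ)/(n:ℝ) + 2*((j:ℝ)/(n:ℝ))^2))
            + ((n:ℝ)-(k:ℝ)) * (-(p + 2*p^2)) with hx'def
        clear_value x'
        have hAge : Real.exp x' ≤ A := by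
          rw [hAdef]
          calc Real.exp x'
              = Real.exp (-(∑ j ∈ range k, ((j:ℝ)/(n:ℝ) + 2*((j:ℝ)/(n:ℝ))^2)))
                * Real.exp (((n:ℝ)-(k:ℝ)) * (-(p + 2*p^2))) * Real.exp ((n:ℝ)*p) := by
                rw [← Real.exp_add, ← Real.exp_add]; congr 1; rw [hx'def]; ring
            _ ≤ Q * R * Real.exp ((n:ℝ)*p) := by
                refine mul_le_mul_of_nonneg_right ?_ (Real.exp_pos _).le
                exact mul_le_mul hQge hRge (Real.exp_pos _).le hQ0
        have h1A : 1 - A ≤ -x' := by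
          have := Real.add_one_le_exp x'
          linarith [hAge]
        have hsum : ∑ j ∈ range k, ((j:ℝ)/(n:ℝ) + 2*((j:ℝ)/(n:ℝ))^2)
            ≤ (k:ℝ)^2/(2*(n:ℝ)) + (k:ℝ)^2/(3*(n:ℝ)) := by
          rw [Finset.sum_add_distrib]
          have hpart1 : ∑ j ∈ range k, (j:ℝ)/(n:ℝ) ≤ (k:ℝ)^2/(2*(n:ℝ)) := by
            rw [hSval]
            have h2n : (0:ℝ) < 2*(n:ℝ) := by positivity
            rw [div_le_div_iff₀ h2n h2n]
            have hkn : 0 ≤ (k:ℝ)*(n:ℝ) := mul_nonneg hk0 hn0.le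
            linarith [hkn]
          have hpart2 : ∑ j ∈ range k, 2*((j:ℝ)/(n:ℝ))^2 ≤ (k:ℝ)^2/(3*(n:ℝ)) := by
            have he : ∑ j ∈ range k, 2*((j:ℝ)/(n:ℝ))^2
                = (2/(n:ℝ)^2) * ∑ j ∈ range k, (j:ℝ)^2 := by
              rw [Finset.mul_sum]
              refine Finset.sum_congr rfl fun j hj => ?_
              field_simp
            rw [he]
            have h3 := mul_le_mul_of_nonneg_left (sum_sq_real k)
              (by positivity : (0:ℝ) ≤ 2/(n:ℝ)^2)
            exact h3.trans (poly5 (n:ℝ) (k:ℝ) hn0 hk0 (by linarith))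
          linarith
        have hDk := poly6 (n:ℝ) (k:ℝ) hn0
        have hxb : -x' ≤ 2 * D := by
          have hkp : 0 ≤ (k:ℝ)*p := by positivity
          have hkp2 : 0 ≤ (k:ℝ)*p^2 := by positivity
          have hexp : -x' = (∑ j ∈ range k, ((j:ℝ)/(n:ℝ) + 2*((j:ℝ)/(n:ℝ))^2))
              - (k:ℝ)*p - 2*(k:ℝ)*p^2 + 2*(n:ℝ)*p^2 := by
            rw [hx'def]; ring
          have hkn0 : (0:ℝ) ≤ (k:ℝ)^2/(n:ℝ) := by positivity
          rw [hexp, hDdef]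
          linarith [hsum, hDk]
        have h2D : 2*D ≤ Real.exp (3/4)*D := mul_le_mul_of_nonneg_right h2e hD0
        linarith only [h1A, hxb, h2D]
    rw [abs_le]
    constructor <;> linarith
  rw [hRdef]
  calc |(n.choose k : ℝ) * p ^ k * (1 - p) ^ (n - k) -
          Real.exp (-((n:ℝ) * p)) * ((n:ℝ) * p) ^ k / (Nat.factorial k : ℝ)|
      = c * |A - 1| := by
        rw [hterm1, hterm2, ← mul_sub_one, abs_mul, abs_of_pos hc0]
    _ ≤ c * (Real.exp (3/4) * D) := by
        exact mul_le_mul_of_nonneg_left key hc0.le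
    _ = Real.exp (3 / 4) * (((n:ℝ) * p) ^ k / (Nat.factorial k : ℝ)) * Real.exp (-((n:ℝ) * p)) * D := by
        rw [hcdef]; ring
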